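/- Let (E_i)_{i∈I} be a finite family of d×d complex matrices with Σ_{i∈I} E_iᴴ E_i ≼ I in the Löwner order, and let M = Σ_{i∈I} E_i ⊗ conj(E_i) be the associated d²×d² matrix (Kronecker products with the entrywise complex conjugates). If λ ∈ ℂ is an eigenvalue of M with |λ| = 1, then every Jordan block of M with eigenvalue λ has size 1; equivalently, ker((M − λI)²) = ker(M − λI), i.e., the generalized eigenspace of M for λ coincides with the eigenspace. -/

import Mathlib

open Matrix Kronecker ComplexOrder

section Aux

lemma psd_diag_nonneg' {n : Type*} [Fintype n] [DecidableEq n] {A : Matrix n n ℂ}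
    (hA : A.PosSemidef) (i : n) : 0 ≤ A i i := by
  have := hA.dotProduct_mulVec_nonneg (Pi.single i 1)
  simpa [mulVec_single, dotProduct, Pi.single_apply, apply_ite] using this

lemma psd_trace_nonneg' {n : Type*} [Fintype n] [DecidableEq n] {A : Matrix n n ℂ}
    (hA : A.PosSemidef) : 0 ≤ A.trace := by
  rw [Matrix.trace]
  exact Finset.sum_nonneg fun i _ => psd_diag_nonneg' hA i

lemma psd_eq_ct_mul' {n : Type*} [Fintype n] [DecidableEq n] {A : Matrix n n ℂ}
    (hA : A.PosSemidef) : ∃ B : Matrix n n ℂ, A = Bᴴ * B := by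
  open scoped MatrixOrder in
  obtain ⟨B, hB⟩ := CStarAlgebra.nonneg_iff_eq_star_mul_self.mp hA.nonneg
  exact ⟨B, hB⟩

lemma psd_trace_mul_nonneg' {n : Type*} [Fintype n] [DecidableEq n] {A B : Matrix n n ℂ}
    (hA : A.PosSemidef) (hB : B.PosSemidef) : 0 ≤ (A * B).trace := by
  obtain ⟨C, rfl⟩ := psd_eq_ct_mul' hA
  have : (Cᴴ * C * B).trace = (C * B * Cᴴ).trace := by
    rw [Matrix.mul_assoc, Matrix.trace_mul_comm, Matrix.mul_assoc]
  rw [this]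
  exact psd_trace_nonneg' (hB.mul_mul_conjTranspose_same C)

lemma vecMulVec_star_posSemidef' {n : Type*} [Fintype n] (u : n → ℂ) :
    (vecMulVec u (star u)).PosSemidef := by
  exact posSemidef_vecMulVec_self_star u

lemma psd_entry_le_trace' {n : Type*} [Fintype n] [DecidableEq n] {A : Matrix n n ℂ}
    (hA : A.PosSemidef) (a b : n) :
    ‖A a b‖ ≤ A.trace.re := by
  have diag_nonneg := fun i => psd_diag_nonneg' hA i
  obtain ⟨B, rfl⟩ := psd_eq_ct_mul' hA
  set A := Bᴴ * B with hA'
  have hdiag : ∀ c, (A c c).re = ∑ k, ‖B k c‖ ^ 2 := by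
    intro c
    rw [hA', Matrix.mul_apply]
    rw [Complex.re_sum]
    refine Finset.sum_congr rfl fun k _ => ?_
    simp only [conjTranspose_apply, ← Complex.normSq_eq_norm_sq, Complex.normSq_eq_conj_mul_self,
      RCLike.star_def, Complex.mul_re, Complex.conj_re, Complex.conj_im, Complex.normSq_apply]
    ring
  have habs : ‖A a b‖ ≤ ((A a a).re + (A b b).re) / 2 := by
    rw [hA', Matrix.mul_apply]
    calc ‖∑ k, Bᴴ a k * B k b‖
        ≤ ∑ k, ‖Bᴴ a k * B k b‖ := norm_sum_le _ _
      _ ≤ ∑ k, (‖B k a‖ ^ 2 + ‖B k b‖ ^ 2) / 2 := by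
          refine Finset.sum_le_sum fun k _ => ?_
          rw [norm_mul]
          simp only [conjTranspose_apply, RCLike.star_def, Complex.norm_conj]
          nlinarith [sq_nonneg (‖B k a‖ - ‖B k b‖),
            norm_nonneg (B k a), norm_nonneg (B k b)]
      _ = ((A a a).re + (A b b).re) / 2 := by
          rw [hdiag, hdiag, ← Finset.sum_div, Finset.sum_add_distrib]
  refine habs.trans ?_
  have hle : ∀ c : n, (A c c).re ≤ A.trace.re := by
    intro c
    rw [Matrix.trace, Complex.re_sum]
    exact Finset.single_le_sum
      (f := fun i => (A i i).re)
      (fun i _ => (Complex.le_def.mp (diag_nonneg i)).1) (Finset.mem_univ c)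
  linarith [hle a, hle b]

variable {d : ℕ} {I : Type} [Fintype I]

lemma kraus_psd (E : I → Matrix (Fin d) (Fin d) ℂ) {X : Matrix (Fin d) (Fin d) ℂ}
    (hX : X.PosSemidef) : (∑ i, E i * X * (E i)ᴴ).PosSemidef :=
  Finset.sum_induction _ _ (fun a b ha hb => ha.add hb) Matrix.PosSemidef.zero
    (fun i _ => hX.mul_mul_conjTranspose_same (E i))

lemma kraus_trace_eq (E : I → Matrix (Fin d) (Fin d) ℂ) (X : Matrix (Fin d) (Fin d) ℂ) :
    (∑ i, E i * X * (E i)ᴴ).trace = ((∑ i, (E i)ᴴ * E i) * X).trace := by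
  rw [Matrix.trace_sum, Finset.sum_mul, Matrix.trace_sum]
  refine Finset.sum_congr rfl fun i _ => ?_
  rw [Matrix.trace_mul_comm, Matrix.mul_assoc]

lemma kraus_trace_le (E : I → Matrix (Fin d) (Fin d) ℂ)
    (htni : ((1 : Matrix (Fin d) (Fin d) ℂ) - ∑ i, (E i)ᴴ * E i).PosSemidef)
    {X : Matrix (Fin d) (Fin d) ℂ} (hX : X.PosSemidef) :
    (∑ i, E i * X * (E i)ᴴ).trace.re ≤ X.trace.re := by
  have h0 : 0 ≤ (((1 : Matrix (Fin d) (Fin d) ℂ) - ∑ i, (E i)ᴴ * E i) * X).trace :=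
    psd_trace_mul_nonneg' htni hX
  rw [Matrix.sub_mul, Matrix.one_mul, Matrix.trace_sub] at h0
  rw [kraus_trace_eq]
  have := (Complex.le_def.mp h0).1
  simp only [Complex.zero_re, Complex.sub_re] at this
  linarith

lemma kraus_mulVec (E : I → Matrix (Fin d) (Fin d) ℂ) (X : Matrix (Fin d) (Fin d) ℂ) :
    ((∑ i, (E i) ⊗ₖ ((E i).map (starRingEnd ℂ))) *ᵥ (fun p => X p.1 p.2))
      = fun p => (∑ i, E i * X * (E i)ᴴ) p.1 p.2 := by
  funext p
  obtain ⟨a, b⟩ := p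
  simp only [mulVec, dotProduct, Matrix.sum_apply, kroneckerMap_apply, map_apply,
    Matrix.mul_apply, conjTranspose_apply]
  rw [Fintype.sum_prod_type]
  simp only [Finset.sum_mul, Finset.mul_sum]
  have swap1 : ∀ {α β : Type} [Fintype α] [Fintype β] (f : α → β → ℂ),
      ∑ x : α, ∑ y : β, f x y = ∑ y : β, ∑ x : α, f x y := fun f => Finset.sum_comm
  calc ∑ k : Fin d, ∑ l : Fin d, ∑ i : I,
          E i a k * (starRingEnd ℂ) (E i b l) * X k l
      = ∑ k : Fin d, ∑ i : I, ∑ l : Fin d,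
          E i a k * (starRingEnd ℂ) (E i b l) * X k l :=
        Finset.sum_congr rfl fun k _ => swap1 _
    _ = ∑ i : I, ∑ k : Fin d, ∑ l : Fin d,
          E i a k * (starRingEnd ℂ) (E i b l) * X k l := swap1 _
    _ = ∑ i : I, ∑ l : Fin d, ∑ k : Fin d,
          E i a k * (starRingEnd ℂ) (E i b l) * X k l :=
        Finset.sum_congr rfl fun i _ => swap1 _
    _ = ∑ x : I, ∑ x_1 : Fin d, ∑ i : Fin d, E x a i * X i x_1 * star (E x b x_1) :=
        Finset.sum_congr rfl fun i _ => Finset.sum_congr rfl fun l _ =>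
          Finset.sum_congr rfl fun k _ => by
            simp only [RCLike.star_def]; ring

/-- For PSD `P`, the orbit of `vec P` under powers of `M` has entries bounded by `tr P`. -/
lemma psd_orbit_bound (E : I → Matrix (Fin d) (Fin d) ℂ)
    (htni : ((1 : Matrix (Fin d) (Fin d) ℂ) - ∑ i, (E i)ᴴ * E i).PosSemidef)
    {P : Matrix (Fin d) (Fin d) ℂ} (hP : P.PosSemidef) (n : ℕ) (p : Fin d × Fin d) :
    ‖(((∑ i, (E i) ⊗ₖ ((E i).map (starRingEnd ℂ))) ^ n)
      *ᵥ (fun p => P p.1 p.2)) p‖ ≤ P.trace.re := by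
  have key : ∀ n : ℕ, ∃ Q : Matrix (Fin d) (Fin d) ℂ, Q.PosSemidef ∧ Q.trace.re ≤ P.trace.re ∧
      (((∑ i, (E i) ⊗ₖ ((E i).map (starRingEnd ℂ))) ^ n) *ᵥ (fun p => P p.1 p.2))
        = fun p => Q p.1 p.2 := by
    intro n
    induction n with
    | zero => exact ⟨P, hP, le_refl _, by simp⟩
    | succ n ih =>
      obtain ⟨Q, hQ, hQtr, hQeq⟩ := ih
      refine ⟨∑ i, E i * Q * (E i)ᴴ, kraus_psd E hQ,
        (kraus_trace_le E htni hQ).trans hQtr, ?_⟩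
      rw [pow_succ']
      rw [← Matrix.mulVec_mulVec, hQeq, kraus_mulVec]
  obtain ⟨Q, hQ, hQtr, hQeq⟩ := key n
  rw [hQeq]
  exact (psd_entry_le_trace' hQ p.1 p.2).trans hQtr

/-- Vectors with bounded orbit under powers of `M` form a submodule. -/
noncomputable def bddOrbit {m : Type} [Fintype m] [DecidableEq m] (M : Matrix m m ℂ) : Submodule ℂ (m → ℂ) where
  carrier := {x | ∃ C : ℝ, ∀ (n : ℕ) (p : m), ‖((M ^ n) *ᵥ x) p‖ ≤ C}
  add_mem' := by
    rintro x y ⟨C, hC⟩ ⟨D, hD⟩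
    refine ⟨C + D, fun n p => ?_⟩
    rw [Matrix.mulVec_add]
    exact (norm_add_le _ _).trans (add_le_add (hC n p) (hD n p))
  zero_mem' := ⟨0, fun n p => by simp⟩
  smul_mem' := by
    rintro c x ⟨C, hC⟩
    refine ⟨‖c‖ * C, fun n p => ?_⟩
    rw [Matrix.mulVec_smul]
    simp only [Pi.smul_apply, smul_eq_mul, norm_mul]
    exact mul_le_mul_of_nonneg_left (hC n p) (norm_nonneg c)

/-- Polarization: a standard basis vector on `Fin d × Fin d` decomposes into
vectorized rank-one PSD matrices. -/
lemma single_polarization {d : ℕ} (a b : Fin d) :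
    (Pi.single (a, b) (1 : ℂ) : Fin d × Fin d → ℂ) = (4 : ℂ)⁻¹ • ∑ k : Fin 4,
      (Complex.I ^ (k : ℕ)) • (fun p : Fin d × Fin d =>
        (vecMulVec ((Pi.single a 1 : Fin d → ℂ) + Complex.I ^ (k : ℕ) • (Pi.single b 1 : Fin d → ℂ))
          (star ((Pi.single a 1 : Fin d → ℂ) + Complex.I ^ (k : ℕ) • (Pi.single b 1 : Fin d → ℂ)))) p.1 p.2) := by
  funext p
  obtain ⟨c, e⟩ := p
  simp only [Pi.smul_apply, Finset.sum_apply, vecMulVec_apply, Pi.add_apply, Pi.star_apply,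
    Pi.single_apply, smul_eq_mul, Fin.sum_univ_four, Fin.val_zero, Fin.val_one, pow_zero,
    pow_one, star_add, star_mul', star_one, star_zero, Prod.mk.injEq, Fin.isValue]
  have h2 : (Complex.I : ℂ) ^ (2 : ℕ) = -1 := by
    simp [pow_two, Complex.I_mul_I]
  have h3 : (Complex.I : ℂ) ^ (3 : ℕ) = -Complex.I := by
    rw [pow_succ, h2]; ring
  rw [show ((2 : Fin 4) : ℕ) = 2 from rfl, show ((3 : Fin 4) : ℕ) = 3 from rfl, h2, h3]
  simp only [apply_ite (star : ℂ → ℂ), star_one, star_zero, Complex.star_def, map_neg,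
    Complex.conj_I, _root_.map_one, _root_.map_zero]
  by_cases hca : c = a <;> by_cases heb : e = b <;> by_cases hcb : c = b <;>
    by_cases hea : e = a <;>
    simp_all [Prod.ext_iff] <;> ring_nf <;>
    norm_num [Complex.ext_iff]

end Aux

/-- If the super-operator with Kraus operators `(E_i)` is trace-non-increasing
(`Σ_i E_iᴴ E_i ≼ I`) and `λ` is an eigenvalue of the matrix representation
`M = Σ_i E_i ⊗ conj(E_i)` with `|λ| = 1`, then every Jordan block of `M` for `λ` has size 1:
`ker((M − λI)²) = ker(M − λI)`. -/
theorem jordan_block_size_one_of_unit_eigenvalue {d : ℕ} {I : Type} [Fintype I]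
    (E : I → Matrix (Fin d) (Fin d) ℂ)
    (htni : ((1 : Matrix (Fin d) (Fin d) ℂ) - ∑ i, (E i)ᴴ * E i).PosSemidef)
    (M : Matrix (Fin d × Fin d) (Fin d × Fin d) ℂ)
    (hM : M = ∑ i, (E i) ⊗ₖ ((E i).map (starRingEnd ℂ)))
    (lam : ℂ) (hlam : lam ∈ spectrum ℂ M) (habs : ‖lam‖ = 1) :
    LinearMap.ker (((M - lam • (1 : Matrix (Fin d × Fin d) (Fin d × Fin d) ℂ)) ^ 2).mulVecLin)
      = LinearMap.ker ((M - lam • (1 : Matrix (Fin d × Fin d) (Fin d × Fin d) ℂ)).mulVecLin) := by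
  set N := M - lam • (1 : Matrix (Fin d × Fin d) (Fin d × Fin d) ℂ) with hN
  -- every vector has bounded orbit under M
  have hbdd : ∀ x : Fin d × Fin d → ℂ, x ∈ bddOrbit M := by
    intro x
    have hx : x = ∑ q : Fin d × Fin d, x q • (Pi.single q (1 : ℂ) : Fin d × Fin d → ℂ) := by
      funext p
      simp [Pi.single_apply, Finset.sum_apply, Finset.sum_ite_eq', Finset.mem_univ]
    rw [hx]
    refine Submodule.sum_mem _ fun q _ => Submodule.smul_mem _ _ ?_
    obtain ⟨a, b⟩ := q
    rw [single_polarization a b]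
    refine Submodule.smul_mem _ _ (Submodule.sum_mem _ fun k _ => Submodule.smul_mem _ _ ?_)
    refine ⟨(vecMulVec ((Pi.single a 1 : Fin d → ℂ) + Complex.I ^ (k : ℕ) • (Pi.single b 1 : Fin d → ℂ))
      (star ((Pi.single a 1 : Fin d → ℂ) + Complex.I ^ (k : ℕ) • (Pi.single b 1 : Fin d → ℂ)))).trace.re, fun n p => ?_⟩
    rw [hM]
    exact psd_orbit_bound E htni (vecMulVec_star_posSemidef' _) n p
  -- main argument
  refine le_antisymm ?_ ?_
  swap
  · intro v hv
    simp only [LinearMap.mem_ker, Matrix.mulVecLin_apply] at hv ⊢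
    rw [pow_two, ← Matrix.mulVec_mulVec, hv, Matrix.mulVec_zero]
  intro v hv
  simp only [LinearMap.mem_ker, Matrix.mulVecLin_apply] at hv ⊢
  by_contra hw0
  set w := N *ᵥ v with hw
  have hNw : N *ᵥ w = 0 := by
    rw [hw, Matrix.mulVec_mulVec, ← pow_two, hv]
  have hMw : M *ᵥ w = lam • w := by
    have : (M - lam • 1) *ᵥ w = 0 := hNw
    rw [Matrix.sub_mulVec, Matrix.smul_mulVec, Matrix.one_mulVec, sub_eq_zero] at this
    exact this
  have hMv : M *ᵥ v = lam • v + w := by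
    have : w = M *ᵥ v - lam • v := by
      rw [hw, hN, Matrix.sub_mulVec, Matrix.smul_mulVec, Matrix.one_mulVec]
    rw [this]; abel
  have key : ∀ n : ℕ, (M ^ (n + 1)) *ᵥ v
      = lam ^ (n + 1) • v + (((n : ℂ) + 1) * lam ^ n) • w := by
    intro n
    induction n with
    | zero => simpa using hMv
    | succ n ih =>
      rw [pow_succ', ← Matrix.mulVec_mulVec, ih]
      rw [Matrix.mulVec_add, Matrix.mulVec_smul, Matrix.mulVec_smul, hMv, hMw]
      push_cast
      match_scalars <;> ring
  -- get the bound and derive a contradiction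
  obtain ⟨C, hC⟩ := hbdd v
  obtain ⟨p, hp⟩ := Function.ne_iff.mp hw0
  have hwp : 0 < ‖w p‖ := by
    simpa [norm_pos_iff] using hp
  obtain ⟨n, hn⟩ := exists_nat_gt ((C + ‖v p‖) / ‖w p‖)
  have hCn := hC (n + 1) p
  rw [key n] at hCn
  have hsum : (lam ^ (n + 1) • v + (((n : ℂ) + 1) * lam ^ n) • w) p
      = lam ^ (n + 1) * v p + (((n : ℂ) + 1) * lam ^ n) * w p := by simp
  rw [hsum] at hCn
  have h1 : ‖(((n : ℂ) + 1) * lam ^ n) * w p‖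
      = ((n : ℝ) + 1) * ‖w p‖ := by
    rw [norm_mul, norm_mul, norm_pow, habs, one_pow, mul_one]
    congr 1
    rw [show ((n : ℂ) + 1) = ((n + 1 : ℕ) : ℂ) by push_cast; ring, Complex.norm_natCast]
    push_cast; ring
  have h2 : ‖lam ^ (n + 1) * v p‖ = ‖v p‖ := by
    rw [norm_mul, norm_pow, habs, one_pow, one_mul]
  have h4 : ‖(((n : ℂ) + 1) * lam ^ n) * w p‖
      ≤ ‖lam ^ (n + 1) * v p + (((n : ℂ) + 1) * lam ^ n) * w p‖
        + ‖lam ^ (n + 1) * v p‖ := by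
    have h := norm_add_le
      (lam ^ (n + 1) * v p + (((n : ℂ) + 1) * lam ^ n) * w p) (-(lam ^ (n + 1) * v p))
    have h' : lam ^ (n + 1) * v p + ((n : ℂ) + 1) * lam ^ n * w p + -(lam ^ (n + 1) * v p)
        = (((n : ℂ) + 1) * lam ^ n) * w p := by ring
    rw [h', norm_neg] at h
    exact h
  have hgt : C + ‖v p‖ < ((n : ℝ) + 1) * ‖w p‖ := by
    rw [div_lt_iff₀ hwp] at hn
    nlinarith [hwp]
  rw [h1, h2] at h4
  linarith
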